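/- arXiv:2601.02025 — 3 statements merged into one kernel-verified Lean document; each statement's English description precedes it below -/
import Mathlib

section
/- Let (Ω, P) be a probability space, let h : ℝ → ℝ be a measurable bounded function with ‖h‖_∞ = sup_{v∈ℝ} |h(v)|, and let U, V, X, Y : Ω → ℝ be square-integrable random variables such that the ℝ²-valued random vector (U, V) is independent of the ℝ²-valued random vector (X, Y). Suppose D ≥ 0 is a real number such that |E[g(X)] − E[g(Y)]| ≤ D for every function g : ℝ → ℝ that is Lipschitz with constant at most 1. Then for every function f : ℝ → ℝ that is Lipschitz with constant at most 1, one has |E[f(U + h(V)·X)] − E[f(U + h(V)·Y)]| ≤ ‖h‖_∞ · D. -/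
open MeasureTheory ProbabilityTheory

/-- If `(U, V)` is independent of `(X, Y)`, all four variables are
square-integrable, `h` is a measurable bounded function, and `D` uniformly bounds
`|E[g(X)] - E[g(Y)]|` over all 1-Lipschitz test functions `g`, then for every
1-Lipschitz `f` one has `|E[f(U + h(V)·X)] - E[f(U + h(V)·Y)]| ≤ ‖h‖_∞ · D`,
where `‖h‖_∞ = ⨆ v, |h v|`. -/
theorem stmt0
    {Ω : Type*} [MeasurableSpace Ω] (P : Measure Ω) [IsProbabilityMeasure P]
    (h : ℝ → ℝ) (hmeas : Measurable h)
    (hbd : BddAbove (Set.range fun v => |h v|))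
    (U V X Y : Ω → ℝ)
    (hU : MemLp U 2 P) (hV : MemLp V 2 P) (hX : MemLp X 2 P) (hY : MemLp Y 2 P)
    (hindep : IndepFun (fun ω => (U ω, V ω)) (fun ω => (X ω, Y ω)) P)
    (D : ℝ) (hD : 0 ≤ D)
    (hDbound : ∀ g : ℝ → ℝ, LipschitzWith 1 g →
      |(∫ ω, g (X ω) ∂P) - ∫ ω, g (Y ω) ∂P| ≤ D)
    (f : ℝ → ℝ) (hf : LipschitzWith 1 f) :
    |(∫ ω, f (U ω + h (V ω) * X ω) ∂P) - ∫ ω, f (U ω + h (V ω) * Y ω) ∂P| ≤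
      (⨆ v, |h v|) * D := by
  set M : ℝ := ⨆ v, |h v| with hMdef
  have hMle : ∀ v, |h v| ≤ M := fun v => le_ciSup hbd v
  have hM0 : 0 ≤ M := le_trans (abs_nonneg _) (hMle 0)
  have hfabs : ∀ a b : ℝ, |f a - f b| ≤ |a - b| := by
    intro a b
    have := hf.dist_le_mul a b
    simpa [Real.dist_eq] using this
  have hfc : Continuous f := hf.continuous
  -- integrability helper for fixed u c
  have hcomp : ∀ (u c : ℝ) (Z : Ω → ℝ), MemLp Z 2 P →
      Integrable (fun ω => f (u + c * Z ω)) P := by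
    intro u c Z hZ
    have hZ1 : Integrable Z P := hZ.integrable one_le_two
    have hsm : AEStronglyMeasurable (fun ω => f (u + c * Z ω)) P :=
      hfc.comp_aestronglyMeasurable
        ((hZ.aestronglyMeasurable.const_smul c).const_add u)
    refine Integrable.mono' ((integrable_const (|f u|)).add (hZ1.abs.const_mul |c|)) hsm ?_
    filter_upwards with ω
    have h1 : |f (u + c * Z ω) - f u| ≤ |c * Z ω| := by
      simpa using hfabs (u + c * Z ω) u
    have : |f (u + c * Z ω)| ≤ |f u| + |c * Z ω| := by
      calc |f (u + c * Z ω)| = |f u + (f (u + c * Z ω) - f u)| := by ring_nf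
        _ ≤ |f u| + |f (u + c * Z ω) - f u| := abs_add_le _ _
        _ ≤ |f u| + |c * Z ω| := by linarith
    simpa [abs_mul, Real.norm_eq_abs] using this
  -- key lemma
  have key : ∀ u c : ℝ, |c| ≤ M →
      |(∫ ω, f (u + c * X ω) ∂P) - ∫ ω, f (u + c * Y ω) ∂P| ≤ M * D := by
    intro u c hc
    rcases eq_or_ne c 0 with rfl | hc0
    · simp [mul_nonneg hM0 hD]
    · have habs : (0:ℝ) < |c| := abs_pos.mpr hc0
      set g : ℝ → ℝ := fun x => |c|⁻¹ * f (u + c * x) with hgdef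
      have hgl : LipschitzWith 1 g := by
        refine LipschitzWith.of_dist_le_mul fun a b => ?_
        have : dist (g a) (g b) = |c|⁻¹ * |f (u + c * a) - f (u + c * b)| := by
          rw [Real.dist_eq, hgdef]
          rw [← mul_sub, abs_mul, abs_inv, abs_abs]
        rw [this]
        have h1 : |f (u + c * a) - f (u + c * b)| ≤ |c| * |a - b| := by
          have := hfabs (u + c * a) (u + c * b)
          calc |f (u + c * a) - f (u + c * b)| ≤ |u + c * a - (u + c * b)| := this
            _ = |c| * |a - b| := by rw [← abs_mul]; ring_nf
        calc |c|⁻¹ * |f (u + c * a) - f (u + c * b)| ≤ |c|⁻¹ * (|c| * |a - b|) := by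
              exact mul_le_mul_of_nonneg_left h1 (by positivity)
          _ = |a - b| := by field_simp
          _ ≤ 1 * dist a b := by rw [one_mul, Real.dist_eq]
      have hgb := hDbound g hgl
      have hX' : (∫ ω, g (X ω) ∂P) = |c|⁻¹ * ∫ ω, f (u + c * X ω) ∂P := by
        simp only [hgdef]; exact integral_const_mul _ _
      have hY' : (∫ ω, g (Y ω) ∂P) = |c|⁻¹ * ∫ ω, f (u + c * Y ω) ∂P := by
        simp only [hgdef]; exact integral_const_mul _ _
      rw [hX', hY', ← mul_sub, abs_mul, abs_inv, abs_abs] at hgb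
      have h2 : |(∫ ω, f (u + c * X ω) ∂P) - ∫ ω, f (u + c * Y ω) ∂P| ≤ |c| * D := by
        have h3 := mul_le_mul_of_nonneg_left hgb (le_of_lt habs)
        calc |(∫ ω, f (u + c * X ω) ∂P) - ∫ ω, f (u + c * Y ω) ∂P|
            = |c| * (|c|⁻¹ * |(∫ ω, f (u + c * X ω) ∂P) - ∫ ω, f (u + c * Y ω) ∂P|) := by
              field_simp
          _ ≤ |c| * D := h3
      exact h2.trans (mul_le_mul_of_nonneg_right hc hD)
  -- measures
  have hUVm : AEMeasurable (fun ω => (U ω, V ω)) P :=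
    (hU.aestronglyMeasurable.aemeasurable).prodMk hV.aestronglyMeasurable.aemeasurable
  have hXYm : AEMeasurable (fun ω => (X ω, Y ω)) P :=
    (hX.aestronglyMeasurable.aemeasurable).prodMk hY.aestronglyMeasurable.aemeasurable
  set μ : Measure (ℝ × ℝ) := P.map (fun ω => (U ω, V ω)) with hμdef
  set ν : Measure (ℝ × ℝ) := P.map (fun ω => (X ω, Y ω)) with hνdef
  have hμprob : IsProbabilityMeasure μ := Measure.isProbabilityMeasure_map hUVm
  have hνprob : IsProbabilityMeasure ν := Measure.isProbabilityMeasure_map hXYm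
  have hmap : P.map (fun ω => ((U ω, V ω), (X ω, Y ω))) = μ.prod ν :=
    (indepFun_iff_map_prod_eq_prod_map_map hUVm hXYm).mp hindep
  set G : (ℝ × ℝ) × (ℝ × ℝ) → ℝ :=
    fun p => f (p.1.1 + h p.1.2 * p.2.1) - f (p.1.1 + h p.1.2 * p.2.2) with hGdef
  have hGmeas : Measurable G := by
    apply Measurable.sub
    · exact hfc.measurable.comp
        (measurable_fst.fst.add ((hmeas.comp measurable_fst.snd).mul measurable_snd.fst))
    · exact hfc.measurable.comp
        (measurable_fst.fst.add ((hmeas.comp measurable_fst.snd).mul measurable_snd.snd))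
  -- integrability of G on μ.prod ν
  have hXYint : Integrable (fun xy : ℝ × ℝ => M * (|xy.1| + |xy.2|)) ν := by
    rw [hνdef]
    rw [integrable_map_measure (g := fun xy : ℝ × ℝ => M * (|xy.1| + |xy.2|))
      ((measurable_fst.abs.add measurable_snd.abs).const_mul M).aestronglyMeasurable hXYm]
    have : Integrable (fun ω => M * (|X ω| + |Y ω|)) P :=
      (((hX.integrable one_le_two).abs.add (hY.integrable one_le_two).abs).const_mul M)
    exact this
  have hsndint : Integrable (fun p : (ℝ × ℝ) × (ℝ × ℝ) => M * (|p.2.1| + |p.2.2|)) (μ.prod ν) := by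
    have hmap2 : (μ.prod ν).map Prod.snd = ν := by
      rw [Measure.map_snd_prod, measure_univ, one_smul]
    have h4 : Integrable (fun xy : ℝ × ℝ => M * (|xy.1| + |xy.2|)) ((μ.prod ν).map Prod.snd) := by
      rw [hmap2]; exact hXYint
    exact (integrable_map_measure
      ((measurable_fst.abs.add measurable_snd.abs).const_mul M).aestronglyMeasurable
      measurable_snd.aemeasurable).mp h4
  have hGbd : ∀ p : (ℝ × ℝ) × (ℝ × ℝ), |G p| ≤ M * (|p.2.1| + |p.2.2|) := by
    intro p
    have h1 : |G p| ≤ |h p.1.2 * p.2.1 - h p.1.2 * p.2.2| := by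
      have := hfabs (p.1.1 + h p.1.2 * p.2.1) (p.1.1 + h p.1.2 * p.2.2)
      calc |G p| ≤ |p.1.1 + h p.1.2 * p.2.1 - (p.1.1 + h p.1.2 * p.2.2)| := this
        _ = |h p.1.2 * p.2.1 - h p.1.2 * p.2.2| := by ring_nf
    calc |G p| ≤ |h p.1.2 * p.2.1 - h p.1.2 * p.2.2| := h1
      _ = |h p.1.2| * |p.2.1 - p.2.2| := by rw [← mul_sub, abs_mul]
      _ ≤ M * (|p.2.1| + |p.2.2|) := by
          apply mul_le_mul (hMle _) (abs_sub _ _) (abs_nonneg _) hM0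
  have hGint : Integrable G (μ.prod ν) := by
    refine Integrable.mono' hsndint hGmeas.aestronglyMeasurable ?_
    filter_upwards with p
    simpa [Real.norm_eq_abs] using hGbd p
  -- rewrite LHS as iterated integral
  have hAint : Integrable (fun ω => f (U ω + h (V ω) * X ω)) P := by
    have hsm : AEStronglyMeasurable (fun ω => f (U ω + h (V ω) * X ω)) P := by
      apply hfc.comp_aestronglyMeasurable
      apply AEStronglyMeasurable.add hU.aestronglyMeasurable
      exact ((hmeas.comp_aemeasurable hV.aestronglyMeasurable.aemeasurable).aestronglyMeasurable).mul
        hX.aestronglyMeasurable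
    refine Integrable.mono' ((integrable_const (|f 0|)).add
      ((hU.integrable one_le_two).abs.add ((hX.integrable one_le_two).abs.const_mul M))) hsm ?_
    filter_upwards with ω
    have h1 : |f (U ω + h (V ω) * X ω) - f 0| ≤ |U ω + h (V ω) * X ω| := by
      simpa using hfabs (U ω + h (V ω) * X ω) 0
    have h2 : |U ω + h (V ω) * X ω| ≤ |U ω| + M * |X ω| := by
      calc |U ω + h (V ω) * X ω| ≤ |U ω| + |h (V ω) * X ω| := abs_add_le _ _
        _ ≤ |U ω| + M * |X ω| := by
            rw [abs_mul]
            exact add_le_add_right (mul_le_mul_of_nonneg_right (hMle _) (abs_nonneg _)) _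
    have : |f (U ω + h (V ω) * X ω)| ≤ |f 0| + (|U ω| + M * |X ω|) := by
      calc |f (U ω + h (V ω) * X ω)| ≤ |f 0| + |f (U ω + h (V ω) * X ω) - f 0| := by
            have := abs_add_le (f 0) (f (U ω + h (V ω) * X ω) - f 0)
            simpa using this
        _ ≤ |f 0| + (|U ω| + M * |X ω|) := add_le_add_right (h1.trans h2) _
    simpa [Real.norm_eq_abs] using this
  have hBint : Integrable (fun ω => f (U ω + h (V ω) * Y ω)) P := by
    have hsm : AEStronglyMeasurable (fun ω => f (U ω + h (V ω) * Y ω)) P := by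
      apply hfc.comp_aestronglyMeasurable
      apply AEStronglyMeasurable.add hU.aestronglyMeasurable
      exact ((hmeas.comp_aemeasurable hV.aestronglyMeasurable.aemeasurable).aestronglyMeasurable).mul
        hY.aestronglyMeasurable
    refine Integrable.mono' ((integrable_const (|f 0|)).add
      ((hU.integrable one_le_two).abs.add ((hY.integrable one_le_two).abs.const_mul M))) hsm ?_
    filter_upwards with ω
    have h1 : |f (U ω + h (V ω) * Y ω) - f 0| ≤ |U ω + h (V ω) * Y ω| := by
      simpa using hfabs (U ω + h (V ω) * Y ω) 0
    have h2 : |U ω + h (V ω) * Y ω| ≤ |U ω| + M * |Y ω| := by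
      calc |U ω + h (V ω) * Y ω| ≤ |U ω| + |h (V ω) * Y ω| := abs_add_le _ _
        _ ≤ |U ω| + M * |Y ω| := by
            rw [abs_mul]
            exact add_le_add_right (mul_le_mul_of_nonneg_right (hMle _) (abs_nonneg _)) _
    have : |f (U ω + h (V ω) * Y ω)| ≤ |f 0| + (|U ω| + M * |Y ω|) := by
      calc |f (U ω + h (V ω) * Y ω)| ≤ |f 0| + |f (U ω + h (V ω) * Y ω) - f 0| := by
            have := abs_add_le (f 0) (f (U ω + h (V ω) * Y ω) - f 0)
            simpa using this
        _ ≤ |f 0| + (|U ω| + M * |Y ω|) := add_le_add_right (h1.trans h2) _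
    simpa [Real.norm_eq_abs] using this
  have hdiff : (∫ ω, f (U ω + h (V ω) * X ω) ∂P) - (∫ ω, f (U ω + h (V ω) * Y ω) ∂P)
      = ∫ p, G p ∂(μ.prod ν) := by
    rw [← integral_sub hAint hBint, ← hmap]
    rw [integral_map (hUVm.prodMk hXYm) hGmeas.aestronglyMeasurable]
  rw [hdiff, integral_prod _ hGint]
  -- bound the outer integral
  have hinner : ∀ uv : ℝ × ℝ, |∫ xy, G (uv, xy) ∂ν| ≤ M * D := by
    intro uv
    have hint1 : Integrable (fun xy : ℝ × ℝ => f (uv.1 + h uv.2 * xy.1)) ν :=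
      (integrable_map_measure (g := fun xy : ℝ × ℝ => f (uv.1 + h uv.2 * xy.1))
        (hfc.measurable.comp ((measurable_fst.const_mul (h uv.2)).const_add uv.1)).aestronglyMeasurable
        hXYm).mpr (hcomp uv.1 (h uv.2) X hX)
    have hint2 : Integrable (fun xy : ℝ × ℝ => f (uv.1 + h uv.2 * xy.2)) ν :=
      (integrable_map_measure (g := fun xy : ℝ × ℝ => f (uv.1 + h uv.2 * xy.2))
        (hfc.measurable.comp ((measurable_snd.const_mul (h uv.2)).const_add uv.1)).aestronglyMeasurable
        hXYm).mpr (hcomp uv.1 (h uv.2) Y hY)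
    have hsplit : (∫ xy, G (uv, xy) ∂ν)
        = (∫ ω, f (uv.1 + h uv.2 * X ω) ∂P) - ∫ ω, f (uv.1 + h uv.2 * Y ω) ∂P := by
      have e1 : (∫ xy, f (uv.1 + h uv.2 * xy.1) ∂ν) = ∫ ω, f (uv.1 + h uv.2 * X ω) ∂P :=
        integral_map (f := fun xy : ℝ × ℝ => f (uv.1 + h uv.2 * xy.1)) hXYm
          (hfc.measurable.comp ((measurable_fst.const_mul (h uv.2)).const_add uv.1)).aestronglyMeasurable
      have e2 : (∫ xy, f (uv.1 + h uv.2 * xy.2) ∂ν) = ∫ ω, f (uv.1 + h uv.2 * Y ω) ∂P :=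
        integral_map (f := fun xy : ℝ × ℝ => f (uv.1 + h uv.2 * xy.2)) hXYm
          (hfc.measurable.comp ((measurable_snd.const_mul (h uv.2)).const_add uv.1)).aestronglyMeasurable
      rw [hGdef]
      simp only
      rw [integral_sub hint1 hint2, e1, e2]
    rw [hsplit]
    exact key uv.1 (h uv.2) (hMle uv.2)
  have := norm_integral_le_of_norm_le_const (μ := μ)
    (f := fun uv => ∫ xy, G (uv, xy) ∂ν) (C := M * D) ?_
  · simpa [Real.norm_eq_abs, measure_univ] using this
  · filter_upwards with uv
    simpa [Real.norm_eq_abs] using hinner uv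
end

section
/- Let n ≥ 1 and let X₁, …, Xₙ, Y₁, …, Yₙ be 2n real-valued square-integrable random variables on a common probability space that are mutually independent (the family of all 2n variables is independent). Let c₁, …, cₙ be real numbers and C ≥ 0 with |c_k| ≤ C for all k. Suppose D₁, …, Dₙ ≥ 0 are such that for each k ∈ {1, …, n} and every function g : ℝ → ℝ Lipschitz with constant at most 1, |E[g(X_k)] − E[g(Y_k)]| ≤ D_k. Then for every function f : ℝ → ℝ Lipschitz with constant at most 1, |E[f(Σ_{k=1}^n c_k X_k)] − E[f(Σ_{k=1}^n c_k Y_k)]| ≤ C · Σ_{k=1}^n D_k. -/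
open MeasureTheory ProbabilityTheory

lemma iIndepFun_of_ae_eq {ι Ω : Type*} [MeasurableSpace Ω] {μ : Measure Ω} {β : ι → Type*}
    [m : ∀ i, MeasurableSpace (β i)] {f f' : ∀ i, Ω → β i}
    (h : iIndepFun f μ) (hff' : ∀ i, f i =ᵐ[μ] f' i) : iIndepFun f' μ := by
  rw [iIndepFun_iff_measure_inter_preimage_eq_mul] at h ⊢
  intro S sets H
  have hae : ∀ᵐ ω ∂μ, ∀ i ∈ S, f i ω = f' i ω :=
    (ae_ball_iff S.countable_toSet).2 fun i _ => hff' i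
  have h2 : ((⋂ i ∈ S, f i ⁻¹' sets i) : Set Ω) =ᵐ[μ] (⋂ i ∈ S, f' i ⁻¹' sets i : Set Ω) := by
    rw [Filter.eventuallyEq_set]
    filter_upwards [hae] with ω hω
    simp only [Set.mem_iInter, Set.mem_preimage]
    constructor
    · intro hh i hi; rw [← hω i hi]; exact hh i hi
    · intro hh i hi; rw [hω i hi]; exact hh i hi
  have h3 : ∀ i ∈ S, μ (f i ⁻¹' sets i) = μ (f' i ⁻¹' sets i) := by
    intro i hi
    apply measure_congr
    rw [Filter.eventuallyEq_set]
    filter_upwards [hff' i] with ω hω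
    simp [Set.mem_preimage, hω]
  rw [← measure_congr h2, h S H]
  exact Finset.prod_congr rfl h3


lemma key_step {Ω : Type*} [MeasurableSpace Ω] (P : Measure Ω) [IsProbabilityMeasure P]
    {U A B : Ω → ℝ} (hUm : Measurable U) (hAm : Measurable A) (hBm : Measurable B)
    (hUi : Integrable U P) (hAi : Integrable A P) (hBi : Integrable B P)
    (hUA : IndepFun U A P) (hUB : IndepFun U B P) {K : ℝ}
    (hbound : ∀ g : ℝ → ℝ, LipschitzWith 1 g →
      |(∫ ω, g (A ω) ∂P) - ∫ ω, g (B ω) ∂P| ≤ K)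
    {f : ℝ → ℝ} (hf : LipschitzWith 1 f) :
    |(∫ ω, f (U ω + A ω) ∂P) - ∫ ω, f (U ω + B ω) ∂P| ≤ K := by
  have hfc : Continuous f := hf.continuous
  set μ := P.map U with hμ
  set ν := P.map A with hν
  set ν' := P.map B with hν'
  haveI : IsProbabilityMeasure μ := Measure.isProbabilityMeasure_map hUm.aemeasurable
  haveI : IsProbabilityMeasure ν := Measure.isProbabilityMeasure_map hAm.aemeasurable
  haveI : IsProbabilityMeasure ν' := Measure.isProbabilityMeasure_map hBm.aemeasurable
  have habs : ∀ t : ℝ, |f t| ≤ |f 0| + |t| := by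
    intro t
    have := hf.dist_le_mul t 0
    simp only [Real.dist_eq, NNReal.coe_one, one_mul, sub_zero] at this
    calc |f t| ≤ |f t - f 0| + |f 0| := by
          have := abs_sub_abs_le_abs_sub (f t) (f 0); linarith [abs_nonneg (f 0)]
      _ ≤ |f 0| + |t| := by linarith
  have hidμ : Integrable (fun x : ℝ => x) μ :=
    (integrable_map_measure aestronglyMeasurable_id hUm.aemeasurable).2 hUi
  -- integrability of f (p.1 + p.2) on product measures
  have Hint : ∀ (ρ : Measure ℝ), IsProbabilityMeasure ρ → Integrable (fun x : ℝ => x) ρ →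
      Integrable (fun p : ℝ × ℝ => f (p.1 + p.2)) (μ.prod ρ) := by
    intro ρ hρ hidρ
    haveI := hρ
    have hmeas : AEStronglyMeasurable (fun p : ℝ × ℝ => f (p.1 + p.2)) (μ.prod ρ) :=
      (hfc.comp (continuous_fst.add continuous_snd)).aestronglyMeasurable
    have h1 : Integrable (fun p : ℝ × ℝ => |p.1|) (μ.prod ρ) := by
      have : Integrable (fun x : ℝ => |x|) μ := hidμ.abs
      have hm : Integrable (fun x : ℝ => |x|) ((μ.prod ρ).map Prod.fst) := by
        rw [Measure.map_fst_prod]; simpa using this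
      rw [integrable_map_measure continuous_abs.aestronglyMeasurable
        measurable_fst.aemeasurable] at hm
      exact hm
    have h2 : Integrable (fun p : ℝ × ℝ => |p.2|) (μ.prod ρ) := by
      have : Integrable (fun x : ℝ => |x|) ρ := hidρ.abs
      have hm : Integrable (fun x : ℝ => |x|) ((μ.prod ρ).map Prod.snd) := by
        rw [Measure.map_snd_prod]; simpa using this
      rw [integrable_map_measure continuous_abs.aestronglyMeasurable
        measurable_snd.aemeasurable] at hm
      exact hm
    refine Integrable.mono' (((integrable_const (|f 0|)).add h1).add h2) hmeas ?_
    filter_upwards with p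
    simp only [Real.norm_eq_abs, Pi.add_apply]
    have h3 := habs (p.1 + p.2)
    have h4 := abs_add_le p.1 p.2
    linarith

  have HA := Hint ν inferInstance
    ((integrable_map_measure aestronglyMeasurable_id hAm.aemeasurable).2 hAi)
  have HB := Hint ν' inferInstance
    ((integrable_map_measure aestronglyMeasurable_id hBm.aemeasurable).2 hBi)
  -- rewrite the two integrals as iterated integrals
  have key : ∀ (V : Ω → ℝ) (hVm : Measurable V) (ρ : Measure ℝ), IsProbabilityMeasure ρ →
      ρ = P.map V →
      IndepFun U V P → Integrable (fun p : ℝ × ℝ => f (p.1 + p.2)) (μ.prod ρ) →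
      (∫ ω, f (U ω + V ω) ∂P) = ∫ u, ∫ x, f (u + x) ∂ρ ∂μ := by
    intro V hVm ρ hρp hρe hUV Hi
    haveI := hρp
    have hmap : P.map (fun ω => (U ω, V ω)) = μ.prod ρ := by
      rw [hρe, hμ]
      exact (indepFun_iff_map_prod_eq_prod_map_map hUm.aemeasurable hVm.aemeasurable).mp hUV
    calc (∫ ω, f (U ω + V ω) ∂P)
        = ∫ p : ℝ × ℝ, f (p.1 + p.2) ∂(P.map (fun ω => (U ω, V ω))) := by
          rw [integral_map (hUm.prodMk hVm).aemeasurable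
            (by rw [hmap]; exact (hfc.comp (continuous_fst.add continuous_snd)).aestronglyMeasurable)]
      _ = ∫ p : ℝ × ℝ, f (p.1 + p.2) ∂(μ.prod ρ) := by rw [hmap]
      _ = ∫ u, ∫ x, f (u + x) ∂ρ ∂μ := integral_prod _ Hi
  rw [key A hAm ν inferInstance hν hUA HA, key B hBm ν' inferInstance hν' hUB HB]
  -- now bound the difference of iterated integrals
  have hFA : Integrable (fun u => ∫ x, f (u + x) ∂ν) μ := HA.integral_prod_left
  have hFB : Integrable (fun u => ∫ x, f (u + x) ∂ν') μ := HB.integral_prod_left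
  have hptwise : ∀ u : ℝ, |(∫ x, f (u + x) ∂ν) - ∫ x, f (u + x) ∂ν'| ≤ K := by
    intro u
    have hg : LipschitzWith 1 (fun x => f (u + x)) := by
      have := hf.comp (isometry_add_left u).lipschitz
      simpa [Function.comp_def] using this
    have e1 : (∫ x, f (u + x) ∂ν) = ∫ ω, f (u + A ω) ∂P := by
      rw [hν]
      exact integral_map hAm.aemeasurable (Continuous.aestronglyMeasurable (by fun_prop))
    have e2 : (∫ x, f (u + x) ∂ν') = ∫ ω, f (u + B ω) ∂P := by
      rw [hν']
      exact integral_map hBm.aemeasurable (Continuous.aestronglyMeasurable (by fun_prop))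
    rw [e1, e2]
    exact hbound _ hg
  rw [← integral_sub hFA hFB]
  calc |∫ u, ((∫ x, f (u + x) ∂ν) - ∫ x, f (u + x) ∂ν') ∂μ|
      ≤ ∫ u, |(∫ x, f (u + x) ∂ν) - ∫ x, f (u + x) ∂ν'| ∂μ := by
        simpa [Real.norm_eq_abs] using
          norm_integral_le_integral_norm (fun u => (∫ x, f (u + x) ∂ν) - ∫ x, f (u + x) ∂ν')
    _ ≤ ∫ _u, K ∂μ := by
        refine integral_mono (hFA.sub hFB).abs (integrable_const K) ?_
        intro u; exact hptwise u
    _ = K := by simp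

/-- Hybrid-argument Wasserstein bound: if the `2n` square-integrable
random variables `X₁, …, Xₙ, Y₁, …, Yₙ` are mutually independent, `|c k| ≤ C`, and
`D k` bounds `|E[g(X k)] - E[g(Y k)]|` over all 1-Lipschitz `g`, then for every
1-Lipschitz `f`, `|E[f(Σ c k • X k)] - E[f(Σ c k • Y k)]| ≤ C · Σ D k`. -/
theorem stmt1
    {Ω : Type*} [MeasurableSpace Ω] (P : Measure Ω) [IsProbabilityMeasure P]
    (n : ℕ) (hn : 1 ≤ n)
    (X Y : Fin n → Ω → ℝ)
    (hX : ∀ k, MemLp (X k) 2 P) (hY : ∀ k, MemLp (Y k) 2 P)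
    (hindep : iIndepFun (Sum.elim X Y) P)
    (c : Fin n → ℝ) (C : ℝ) (hC : 0 ≤ C) (hc : ∀ k, |c k| ≤ C)
    (D : Fin n → ℝ) (hD : ∀ k, 0 ≤ D k)
    (hDbound : ∀ k, ∀ g : ℝ → ℝ, LipschitzWith 1 g →
      |(∫ ω, g (X k ω) ∂P) - ∫ ω, g (Y k ω) ∂P| ≤ D k)
    (f : ℝ → ℝ) (hf : LipschitzWith 1 f) :
    |(∫ ω, f (∑ k, c k * X k ω) ∂P) - ∫ ω, f (∑ k, c k * Y k ω) ∂P| ≤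
      C * ∑ k, D k := by
  classical
  have hfc : Continuous f := hf.continuous
  -- measurable modifications
  have hWmem : ∀ i : Fin n ⊕ Fin n, MemLp (Sum.elim X Y i) 2 P := by
    rintro (k | k)
    · exact hX k
    · exact hY k
  set Z : Fin n ⊕ Fin n → Ω → ℝ := fun i => (hWmem i).1.mk (Sum.elim X Y i) with hZdef
  have hZae : ∀ i, Sum.elim X Y i =ᵐ[P] Z i := fun i => (hWmem i).1.ae_eq_mk
  have hZmeas : ∀ i, Measurable (Z i) := fun i =>
    (hWmem i).1.stronglyMeasurable_mk.measurable
  have hindep' : iIndepFun Z P := iIndepFun_of_ae_eq hindep hZae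
  have hZmem : ∀ i, MemLp (Z i) 2 P := fun i => (hWmem i).ae_eq (hZae i)
  have hZint : ∀ i, Integrable (Z i) P := fun i =>
    (hZmem i).integrable (by norm_num)
  set X' : Fin n → Ω → ℝ := fun k => Z (Sum.inl k) with hX'def
  set Y' : Fin n → Ω → ℝ := fun k => Z (Sum.inr k) with hY'def
  have hXae : ∀ k, X k =ᵐ[P] X' k := fun k => hZae (Sum.inl k)
  have hYae : ∀ k, Y k =ᵐ[P] Y' k := fun k => hZae (Sum.inr k)
  -- replace X by X', Y by Y' in the goal
  have egoalX : (∫ ω, f (∑ k, c k * X k ω) ∂P) = ∫ ω, f (∑ k, c k * X' k ω) ∂P := by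
    apply integral_congr_ae
    have h := ae_all_iff.mpr hXae
    filter_upwards [h] with ω hω
    congr 1
    exact Finset.sum_congr rfl fun k _ => by rw [hω k]
  have egoalY : (∫ ω, f (∑ k, c k * Y k ω) ∂P) = ∫ ω, f (∑ k, c k * Y' k ω) ∂P := by
    apply integral_congr_ae
    have h := ae_all_iff.mpr hYae
    filter_upwards [h] with ω hω
    congr 1
    exact Finset.sum_congr rfl fun k _ => by rw [hω k]
  rw [egoalX, egoalY]
  -- transported hypothesis
  have hDbound' : ∀ k, ∀ g : ℝ → ℝ, LipschitzWith 1 g →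
      |(∫ ω, g (X' k ω) ∂P) - ∫ ω, g (Y' k ω) ∂P| ≤ D k := by
    intro k g hg
    have e1 : (∫ ω, g (X' k ω) ∂P) = ∫ ω, g (X k ω) ∂P :=
      integral_congr_ae (((hXae k).fun_comp g).symm)
    have e2 : (∫ ω, g (Y' k ω) ∂P) = ∫ ω, g (Y k ω) ∂P :=
      integral_congr_ae (((hYae k).fun_comp g).symm)
    rw [e1, e2]; exact hDbound k g hg
  -- hybrid sums
  set T : ℕ → Ω → ℝ := fun j ω => ∑ k : Fin n,
    if (k : ℕ) < j then c k * X' k ω else c k * Y' k ω with hTdef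
  set φ : ℕ → ℝ := fun j => ∫ ω, f (T j ω) ∂P with hφdef
  have hT0 : ∀ ω, T 0 ω = ∑ k, c k * Y' k ω := by
    intro ω; simp [hTdef]
  have hTn : ∀ ω, T n ω = ∑ k, c k * X' k ω := by
    intro ω
    exact Finset.sum_congr rfl fun k _ => by simp [k.isLt]
  have egoal2 : φ n = ∫ ω, f (∑ k, c k * X' k ω) ∂P := by
    show (∫ ω, f (T n ω) ∂P) = _
    exact integral_congr_ae (Filter.Eventually.of_forall fun ω =>
      show f (T n ω) = f (∑ k, c k * X' k ω) by rw [hTn ω])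
  have egoal3 : φ 0 = ∫ ω, f (∑ k, c k * Y' k ω) ∂P := by
    show (∫ ω, f (T 0 ω) ∂P) = _
    exact integral_congr_ae (Filter.Eventually.of_forall fun ω =>
      show f (T 0 ω) = f (∑ k, c k * Y' k ω) by rw [hT0 ω])
  rw [← egoal2, ← egoal3]
  -- per-step bound
  have step : ∀ j : Fin n, |φ ((j : ℕ) + 1) - φ (j : ℕ)| ≤ C * D j := by
    intro j
    set U : Ω → ℝ := fun ω => ∑ k ∈ Finset.univ.erase j,
      (if (k : ℕ) < (j : ℕ) then c k * X' k ω else c k * Y' k ω) with hUdef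
    have eq2 : ∀ ω, T (j : ℕ) ω = U ω + c j * Y' j ω := by
      intro ω
      show (∑ k : Fin n, if (k : ℕ) < (j : ℕ) then c k * X' k ω else c k * Y' k ω)
        = U ω + c j * Y' j ω
      rw [← Finset.sum_erase_add _ _ (Finset.mem_univ j)]
      simp [hUdef]
    have eq1 : ∀ ω, T ((j : ℕ) + 1) ω = U ω + c j * X' j ω := by
      intro ω
      show (∑ k : Fin n, if (k : ℕ) < (j : ℕ) + 1 then c k * X' k ω else c k * Y' k ω)
        = U ω + c j * X' j ω
      rw [← Finset.sum_erase_add _ _ (Finset.mem_univ j)]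
      have : (∑ k ∈ Finset.univ.erase j,
          if (k : ℕ) < (j : ℕ) + 1 then c k * X' k ω else c k * Y' k ω) = U ω := by
        apply Finset.sum_congr rfl
        intro k hk
        have hkj : k ≠ j := Finset.ne_of_mem_erase hk
        have : ((k : ℕ) < (j : ℕ) + 1) ↔ ((k : ℕ) < (j : ℕ)) := by
          rw [Nat.lt_succ_iff]
          constructor
          · intro h
            exact lt_of_le_of_ne h (fun hh => hkj (Fin.ext hh))
          · exact le_of_lt
        simp only [this]
      rw [this]
      simp
    -- independence
    set coef : Fin n ⊕ Fin n → ℝ := Sum.elim c c with hcoefdef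
    set V : Fin n ⊕ Fin n → Ω → ℝ := fun i ω => coef i * Z i ω with hVdef
    have hVindep : iIndepFun V P :=
      hindep'.comp (fun i x => coef i * x) (fun i => measurable_id.const_mul _)
    have hVmeas : ∀ i, Measurable (V i) := fun i => (hZmeas i).const_mul _
    set s : Finset (Fin n ⊕ Fin n) := (Finset.univ.erase j).image
      (fun (k : Fin n) => if (k : ℕ) < (j : ℕ) then Sum.inl k else Sum.inr k) with hsdef
    have hinj : ∀ x ∈ Finset.univ.erase j, ∀ y ∈ Finset.univ.erase j,
        (fun (k : Fin n) => if (k : ℕ) < (j : ℕ) then Sum.inl k else Sum.inr k) x =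
        (fun (k : Fin n) => if (k : ℕ) < (j : ℕ) then Sum.inl k else Sum.inr k) y → x = y := by
      intro x _ y _ h
      simp only at h
      by_cases h1 : (x : ℕ) < (j : ℕ) <;> by_cases h2 : (y : ℕ) < (j : ℕ) <;>
        simp only [h1, h2, if_true, if_false] at h <;> simp_all
    have hUsum : U = ∑ i ∈ s, V i := by
      funext ω
      rw [Finset.sum_apply]
      rw [hsdef, Finset.sum_image hinj]
      apply Finset.sum_congr rfl
      intro k hk
      by_cases hkj : (k : ℕ) < (j : ℕ) <;> simp [hVdef, hcoefdef, hkj, hX'def, hY'def]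
    have hjl : Sum.inl j ∉ s := by
      simp only [hsdef, Finset.mem_image]
      rintro ⟨k, hk, hke⟩
      by_cases h1 : (k : ℕ) < (j : ℕ) <;> simp [h1] at hke
      exact (Finset.ne_of_mem_erase hk) hke
    have hjr : Sum.inr j ∉ s := by
      simp only [hsdef, Finset.mem_image]
      rintro ⟨k, hk, hke⟩
      by_cases h1 : (k : ℕ) < (j : ℕ) <;> simp [h1] at hke
      exact (Finset.ne_of_mem_erase hk) hke
    have hUA : IndepFun U (fun ω => c j * X' j ω) P := by
      have h := hVindep.indepFun_finsetSum_of_notMem hVmeas hjl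
      rw [hUsum]
      exact h
    have hUB : IndepFun U (fun ω => c j * Y' j ω) P := by
      have h := hVindep.indepFun_finsetSum_of_notMem hVmeas hjr
      rw [hUsum]
      exact h
    -- measurability and integrability
    have hUmeas : Measurable U := by
      rw [hUdef]
      apply Finset.measurable_sum
      intro k _
      by_cases hkj : (k : ℕ) < (j : ℕ) <;> simp only [hkj, if_true, if_false] <;>
        exact (hZmeas _).const_mul _
    have hUint : Integrable U P := by
      rw [hUdef]
      apply integrable_finset_sum
      intro k _
      by_cases hkj : (k : ℕ) < (j : ℕ) <;> simp only [hkj, if_true, if_false] <;>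
        exact (hZint _).const_mul _
    have hAmeas : Measurable (fun ω => c j * X' j ω) := (hZmeas _).const_mul _
    have hBmeas : Measurable (fun ω => c j * Y' j ω) := (hZmeas _).const_mul _
    have hAint : Integrable (fun ω => c j * X' j ω) P := (hZint _).const_mul _
    have hBint : Integrable (fun ω => c j * Y' j ω) P := (hZint _).const_mul _
    -- Wasserstein bound for the scaled pair
    have hbound : ∀ g : ℝ → ℝ, LipschitzWith 1 g →
        |(∫ ω, g (c j * X' j ω) ∂P) - ∫ ω, g (c j * Y' j ω) ∂P| ≤ C * D j := by
      intro g hg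
      rcases eq_or_ne (c j) 0 with h0 | h0
      · simp only [h0, zero_mul, integral_const, measure_univ, ENNReal.toReal_one, probReal_univ, smul_eq_mul,
          one_mul, sub_self, abs_zero]
        exact mul_nonneg hC (hD j)
      · have hcpos : 0 < |c j| := abs_pos.mpr h0
        have hg' : LipschitzWith 1 (fun x => |c j|⁻¹ * g (c j * x)) := by
          apply LipschitzWith.of_dist_le_mul
          intro x y
          rw [Real.dist_eq, Real.dist_eq]
          simp only [NNReal.coe_one, one_mul]
          have : |c j|⁻¹ * g (c j * x) - |c j|⁻¹ * g (c j * y)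
              = |c j|⁻¹ * (g (c j * x) - g (c j * y)) := by ring
          rw [this, abs_mul, abs_of_pos (inv_pos.mpr hcpos)]
          have hgd := hg.dist_le_mul (c j * x) (c j * y)
          rw [Real.dist_eq, Real.dist_eq] at hgd
          simp only [NNReal.coe_one, one_mul] at hgd
          have : c j * x - c j * y = c j * (x - y) := by ring
          rw [this, abs_mul] at hgd
          calc |c j|⁻¹ * |g (c j * x) - g (c j * y)| ≤ |c j|⁻¹ * (|c j| * |x - y|) := by
                apply mul_le_mul_of_nonneg_left hgd (le_of_lt (inv_pos.mpr hcpos))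
            _ = |x - y| := by field_simp
        have h1 := hDbound' j _ hg'
        rw [integral_const_mul, integral_const_mul, ← mul_sub, abs_mul,
          abs_of_pos (inv_pos.mpr hcpos)] at h1
        have h2 : |(∫ ω, g (c j * X' j ω) ∂P) - ∫ ω, g (c j * Y' j ω) ∂P| ≤ |c j| * D j := by
          have := mul_le_mul_of_nonneg_left h1 (le_of_lt hcpos)
          calc |(∫ ω, g (c j * X' j ω) ∂P) - ∫ ω, g (c j * Y' j ω) ∂P|
              = |c j| * (|c j|⁻¹ *
                |(∫ ω, g (c j * X' j ω) ∂P) - ∫ ω, g (c j * Y' j ω) ∂P|) := by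
                field_simp
            _ ≤ |c j| * D j := this
        exact h2.trans (mul_le_mul_of_nonneg_right (hc j) (hD j))
    have hkey := key_step P hUmeas hAmeas hBmeas hUint hAint hBint hUA hUB hbound hf
    have e1 : φ ((j : ℕ) + 1) = ∫ ω, f (U ω + c j * X' j ω) ∂P := by
      show (∫ ω, f (T ((j : ℕ) + 1) ω) ∂P) = _
      exact integral_congr_ae (Filter.Eventually.of_forall fun ω =>
        show f (T ((j : ℕ) + 1) ω) = f (U ω + c j * X' j ω) by rw [eq1 ω])
    have e2 : φ (j : ℕ) = ∫ ω, f (U ω + c j * Y' j ω) ∂P := by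
      show (∫ ω, f (T (j : ℕ) ω) ∂P) = _
      exact integral_congr_ae (Filter.Eventually.of_forall fun ω =>
        show f (T (j : ℕ) ω) = f (U ω + c j * Y' j ω) by rw [eq2 ω])
    rw [e1, e2]
    exact hkey
  -- telescoping
  have tele : φ n - φ 0 = ∑ j ∈ Finset.range n, (φ (j + 1) - φ j) :=
    (Finset.sum_range_sub φ n).symm
  rw [tele]
  rw [← Fin.sum_univ_eq_sum_range (fun j => φ (j + 1) - φ j) n]
  calc |∑ j : Fin n, (φ ((j : ℕ) + 1) - φ (j : ℕ))|
      ≤ ∑ j : Fin n, |φ ((j : ℕ) + 1) - φ (j : ℕ)| := Finset.abs_sum_le_sum_abs _ _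
    _ ≤ ∑ j : Fin n, C * D j := Finset.sum_le_sum fun j _ => step j
    _ = C * ∑ k, D k := by rw [Finset.mul_sum]
end

section
/- Let a be a real number with −1 < a < −1/2 and let u, v be real numbers with u ≠ v. Then ∫_ℝ (u − y)₊^a (v − y)₊^a dy = β(−1 − 2a, a + 1) · |u − v|^{2a+1}, where for a real number x, x₊^a denotes x^a if x > 0 and 0 if x ≤ 0, and β(s, t) = ∫₀¹ r^{s−1}(1 − r)^{t−1} dr denotes the Euler beta function (well-defined here since −1 − 2a > 0 and a + 1 > 0). -/
open MeasureTheory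

/-- `posPow x a` is `x ^ a` (real power) if `x > 0` and `0` otherwise,
i.e. the "positive part power" `x₊ᵃ`. -/
noncomputable def posPow (x a : ℝ) : ℝ := if 0 < x then x ^ a else 0

lemma posPow_of_pos {x : ℝ} (hx : 0 < x) (a : ℝ) : posPow x a = x ^ a := if_pos hx

lemma posPow_of_nonpos {x : ℝ} (hx : x ≤ 0) (a : ℝ) : posPow x a = 0 := if_neg (not_lt.2 hx)

lemma stmt2_key (a : ℝ) (u v : ℝ) (hvu : v < u) :
    ∫ y : ℝ, posPow (u - y) a * posPow (v - y) a =
      (∫ r in (0:ℝ)..1, r ^ (-1 - 2*a - 1) * (1 - r) ^ (a + 1 - 1)) *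
        (u - v) ^ (2*a + 1) := by
  set c : ℝ := u - v with hc
  have hcpos : 0 < c := sub_pos.2 hvu
  set g : ℝ → ℝ := fun y => posPow (u - y) a * posPow (v - y) a with hg
  set f : ℝ → ℝ := fun r => u - c * r⁻¹ with hf
  -- Step 1: restrict the integral to Iio v
  have h1 : ∫ y : ℝ, g y = ∫ y in Set.Iio v, g y := by
    refine (setIntegral_eq_integral_of_forall_compl_eq_zero fun y hy => ?_).symm
    have : v - y ≤ 0 := by
      simp only [Set.mem_Iio, not_lt] at hy; linarith
    simp [hg, posPow_of_nonpos this]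
  -- Step 2: Iio v is the image of Ioo 0 1 under f
  have h2 : f '' Set.Ioo (0:ℝ) 1 = Set.Iio v := by
    ext y
    constructor
    · rintro ⟨r, ⟨hr0, hr1⟩, rfl⟩
      have : c < c * r⁻¹ := by
        rw [lt_mul_iff_one_lt_right hcpos]
        exact (one_lt_inv₀ hr0).2 hr1
      simp only [hf, Set.mem_Iio]
      linarith
    · intro hy
      simp only [Set.mem_Iio] at hy
      have huy : 0 < u - y := by linarith
      refine ⟨c / (u - y), ⟨?_, ?_⟩, ?_⟩
      · positivity
      · rw [div_lt_one (by linarith)]; simp only [hc]; linarith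
      · simp only [hf]
        rw [inv_div, mul_div_assoc', mul_div_cancel_left₀ _ hcpos.ne']
        ring
  -- Step 3: change of variables
  have hderiv : ∀ r ∈ Set.Ioo (0:ℝ) 1, HasDerivWithinAt f (c * r⁻¹ ^ 2) (Set.Ioo (0:ℝ) 1) r := by
    intro r hr
    have hr0 : r ≠ 0 := ne_of_gt hr.1
    have h := ((hasDerivAt_inv hr0).const_mul c).const_sub u
    have : u - c * r⁻¹ = f r := rfl
    exact h.hasDerivWithinAt.congr_deriv (by ring)
  have hinj : Set.InjOn f (Set.Ioo (0:ℝ) 1) := by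
    intro r hr s hs h
    have hr0 : r ≠ 0 := ne_of_gt hr.1
    have hs0 : s ≠ 0 := ne_of_gt hs.1
    have : c * r⁻¹ = c * s⁻¹ := by simp only [hf] at h; linarith
    have : r⁻¹ = s⁻¹ := mul_left_cancel₀ (ne_of_gt hcpos) this
    exact inv_injective this
  have h3 : ∫ y in Set.Iio v, g y =
      ∫ r in Set.Ioo (0:ℝ) 1, |c * r⁻¹ ^ 2| • g (f r) := by
    rw [← h2]
    exact integral_image_eq_integral_abs_deriv_smul measurableSet_Ioo hderiv hinj g
  -- Step 4: compute the integrand on Ioo 0 1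
  have h4 : ∀ r ∈ Set.Ioo (0:ℝ) 1, |c * r⁻¹ ^ 2| • g (f r) =
      c ^ (2*a + 1) * (r ^ (-1 - 2*a - 1) * (1 - r) ^ (a + 1 - 1)) := by
    rintro r ⟨hr0, hr1⟩
    have hru : u - f r = c * r⁻¹ := by simp [hf]
    have hrv : v - f r = c * (1 - r) * r⁻¹ := by
      simp only [hf, hc]; field_simp; ring
    have h1r : 0 < 1 - r := by linarith
    have hpos1 : 0 < u - f r := by rw [hru]; positivity
    have hpos2 : 0 < v - f r := by rw [hrv]; positivity
    rw [smul_eq_mul]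
    simp only [hg, posPow_of_pos hpos1, posPow_of_pos hpos2]
    rw [hru, hrv]
    rw [abs_of_pos (by positivity)]
    have e1 : c * r⁻¹ ^ 2 = c ^ (1:ℝ) * r ^ ((-2):ℝ) := by
      rw [Real.rpow_one, inv_pow, Real.rpow_neg hr0.le, ← Real.rpow_natCast r 2]
      norm_num
    have e2 : (c * r⁻¹) ^ a = c ^ a * r ^ (-a) := by
      rw [Real.mul_rpow hcpos.le (inv_pos.2 hr0).le, Real.inv_rpow hr0.le,
        ← Real.rpow_neg hr0.le]
    have e3 : (c * (1 - r) * r⁻¹) ^ a = c ^ a * (1 - r) ^ a * r ^ (-a) := by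
      rw [Real.mul_rpow (by positivity) (inv_pos.2 hr0).le,
        Real.mul_rpow hcpos.le h1r.le, Real.inv_rpow hr0.le, ← Real.rpow_neg hr0.le]
    rw [e1, e2, e3, show (-1 - 2*a - 1 : ℝ) = -2 + -a + -a by ring,
      show (a + 1 - 1 : ℝ) = a by ring, show (2*a + 1 : ℝ) = 1 + a + a by ring,
      Real.rpow_add hcpos, Real.rpow_add hcpos, Real.rpow_add hr0, Real.rpow_add hr0]
    ring
  rw [h1, h3, setIntegral_congr_fun measurableSet_Ioo h4, integral_const_mul,
    intervalIntegral.integral_of_le zero_le_one, integral_Ioc_eq_integral_Ioo, mul_comm]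

/-- For `-1 < a < -1/2` and `u ≠ v`,
`∫_ℝ (u - y)₊^a (v - y)₊^a dy = β(-1 - 2a, a + 1) · |u - v| ^ (2a + 1)`,
where `β(s, t) = ∫₀¹ r^(s-1) (1-r)^(t-1) dr` is the Euler beta function. -/
theorem stmt2 (a : ℝ) (ha1 : -1 < a) (ha2 : a < -(1/2)) (u v : ℝ) (huv : u ≠ v) :
    ∫ y : ℝ, posPow (u - y) a * posPow (v - y) a =
      (∫ r in (0:ℝ)..1, r ^ (-1 - 2*a - 1) * (1 - r) ^ (a + 1 - 1)) *
        |u - v| ^ (2*a + 1) := by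
  rcases lt_or_gt_of_ne huv with h | h
  · have := stmt2_key a v u h
    simp only [mul_comm (posPow (v - _) a)] at this
    rw [this, abs_of_neg (sub_neg.2 h), neg_sub]
  · rw [stmt2_key a u v h, abs_of_pos (sub_pos.2 h)]
end
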